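/- In R = K[x,y,z,w], let b ≥ 1 and consider the ideal I_X = ⟨w², w(xz−y²), (xz−y²)², x^{b−1}(xz−y²) − z^b w⟩. Every syzygy (g_1,g_2,g_3,g_4) ∈ R⁴ of these four generators (i.e., w²g_1 + w(xz−y²)g_2 + (xz−y²)²g_3 + (x^{b−1}(xz−y²) − z^b w)g_4 = 0) is an R-linear combination of the columns of the matrix with rows: (−(xz−y²), 0, −z^b, 0), (w, −(xz−y²), x^{b−1}, z^b), (0, w, 0, −x^{b−1}), (0, 0, −w, xz−y²). -/

import Mathlib

open MvPolynomial

lemma myPrime.of_algEquiv {R S : Type*} [CommRing R] [CommRing S]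
    (e : R ≃+* S) {p : R} (h : Prime (e p)) : Prime p :=
  (MulEquiv.prime_iff e.toMulEquiv).mp h

lemma myPrimeXfin {K : Type*} [Field K] : ∀ (n : ℕ) (i : Fin n),
    Prime (X i : MvPolynomial (Fin n) K) := by
  intro n
  induction n with
  | zero => exact fun i => i.elim0
  | succ n ih =>
    intro i
    refine Fin.cases ?_ ?_ i
    · apply myPrime.of_algEquiv (finSuccEquiv K n).toRingEquiv
      show Prime ((finSuccEquiv K n) (X 0))
      rw [finSuccEquiv_X_zero]
      exact Polynomial.prime_X
    · intro j
      apply myPrime.of_algEquiv (finSuccEquiv K n).toRingEquiv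
      show Prime ((finSuccEquiv K n) (X j.succ))
      rw [finSuccEquiv_X_succ, Polynomial.prime_C_iff]
      exact ih j

lemma myPrimeQaux {K : Type*} [Field K] :
    Prime (Polynomial.C (X 1 : MvPolynomial (Fin 3) K) * Polynomial.X
      + Polynomial.C (-(X 0 ^ 2))) := by
  have hX1 : Prime (X 1 : MvPolynomial (Fin 3) K) := myPrimeXfin 3 1
  have hX1X0 : ¬ (X 1 : MvPolynomial (Fin 3) K) ∣ X 0 := by
    intro ⟨c, hc⟩
    have := congrArg (eval ![(1 : K), 0, 0]) hc
    simp at this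
  have hprim : (Polynomial.C (X 1 : MvPolynomial (Fin 3) K) * Polynomial.X
      + Polynomial.C (-(X 0 ^ 2))).IsPrimitive := by
    rw [Polynomial.isPrimitive_iff_isUnit_of_C_dvd]
    intro r hr
    rw [Polynomial.C_dvd_iff_dvd_coeff] at hr
    have c1 := hr 1
    have c0 := hr 0
    rw [Polynomial.coeff_add, Polynomial.coeff_C_mul, Polynomial.coeff_X_one,
      Polynomial.coeff_C, mul_one, if_neg one_ne_zero, add_zero] at c1
    rw [Polynomial.coeff_add, Polynomial.coeff_C_mul, Polynomial.coeff_X_zero,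
      Polynomial.coeff_C, mul_zero, if_pos rfl, zero_add] at c0
    obtain ⟨s, hs⟩ := c1
    rcases hX1.irreducible.isUnit_or_isUnit hs with h | h
    · exact h
    · exfalso
      apply hX1X0
      apply hX1.dvd_of_dvd_pow (n := 2)
      have : (X 1 : MvPolynomial (Fin 3) K) ∣ r := ⟨↑h.unit⁻¹, by rw [hs, mul_assoc, IsUnit.mul_val_inv, mul_one]⟩
      exact dvd_neg.mp (this.trans c0)
  rw [← UniqueFactorizationMonoid.irreducible_iff_prime]
  apply hprim.irreducible_of_irreducible_map_of_injective
    (IsFractionRing.injective (MvPolynomial (Fin 3) K)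
      (FractionRing (MvPolynomial (Fin 3) K)))
  apply Polynomial.irreducible_of_degree_eq_one
  rw [Polynomial.map_add, Polynomial.map_mul, Polynomial.map_C, Polynomial.map_C,
    Polynomial.map_X]
  apply Polynomial.degree_linear
  rw [Ne, map_eq_zero_iff _ (IsFractionRing.injective _ _)]
  exact X_ne_zero 1

lemma myPrimeQ {K : Type*} [Field K] :
    Prime (X 0 * X 2 - X 1 ^ 2 : MvPolynomial (Fin 4) K) := by
  apply myPrime.of_algEquiv (finSuccEquiv K 3).toRingEquiv
  show Prime ((finSuccEquiv K 3) (X 0 * X 2 - X 1 ^ 2))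
  have h1 : (1 : Fin 4) = Fin.succ 0 := rfl
  have h2 : (2 : Fin 4) = Fin.succ 1 := rfl
  rw [map_sub, map_mul, map_pow, h1, h2, finSuccEquiv_X_zero, finSuccEquiv_X_succ,
    finSuccEquiv_X_succ]
  have he : Polynomial.X * Polynomial.C (X 1 : MvPolynomial (Fin 3) K)
      - (Polynomial.C (X 0)) ^ 2
      = Polynomial.C (X 1) * Polynomial.X + Polynomial.C (-(X 0 ^ 2)) := by
    rw [map_neg, ← Polynomial.C_pow]
    ring
  rw [he]
  exact myPrimeQaux

lemma myKer {K : Type*} [Field K] (p : MvPolynomial (Fin 4) K) :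
    (X 3 : MvPolynomial (Fin 4) K) ∣
      p - aeval (fun i : Fin 4 => if i = 3 then (0 : MvPolynomial (Fin 4) K) else X i) p := by
  induction p using MvPolynomial.induction_on with
  | C a => simp
  | add p q hp hq =>
    have h := dvd_add hp hq
    have he : p - aeval (fun i : Fin 4 => if i = 3 then (0 : MvPolynomial (Fin 4) K) else X i) p
        + (q - aeval (fun i : Fin 4 => if i = 3 then (0 : MvPolynomial (Fin 4) K) else X i) q)
        = p + q - aeval (fun i : Fin 4 => if i = 3 then (0 : MvPolynomial (Fin 4) K) else X i)
          (p + q) := by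
      rw [map_add]; ring
    rwa [he] at h
  | mul_X p i hp =>
    rw [map_mul, aeval_X]
    by_cases h : i = 3
    · subst h
      rw [if_pos rfl, mul_zero, sub_zero]
      exact Dvd.intro_left p rfl
    · rw [if_neg h]
      have he : p * X i
          - aeval (fun i : Fin 4 => if i = 3 then (0 : MvPolynomial (Fin 4) K) else X i) p * X i
          = (p - aeval (fun i : Fin 4 => if i = 3 then (0 : MvPolynomial (Fin 4) K) else X i) p)
            * X i := by ring
      rw [he]
      exact hp.mul_right _


/-- Every syzygy of `(w², w(xz−y²), (xz−y²)², x^{b−1}(xz−y²) − z^b w)` in `K[x,y,z,w]`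
is an `R`-linear combination of the four columns of the matrix with rows
`(−(xz−y²), 0, −z^b, 0)`, `(w, −(xz−y²), x^{b−1}, z^b)`, `(0, w, 0, −x^{b−1})`,
`(0, 0, −w, xz−y²)`. -/
theorem stmt13 {K : Type*} [Field K] (b : ℕ) (hb : 1 ≤ b)
    (g1 g2 g3 g4 : MvPolynomial (Fin 4) K)
    (x y z w : MvPolynomial (Fin 4) K)
    (hx : x = X 0) (hy : y = X 1) (hz : z = X 2) (hw : w = X 3)
    (hsyz : w ^ 2 * g1 + w * (x * z - y ^ 2) * g2 + (x * z - y ^ 2) ^ 2 * g3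
      + (x ^ (b - 1) * (x * z - y ^ 2) - z ^ b * w) * g4 = 0) :
    ∃ c1 c2 c3 c4 : MvPolynomial (Fin 4) K,
      g1 = -(x * z - y ^ 2) * c1 + (-(z ^ b)) * c3 ∧
      g2 = w * c1 + (-(x * z - y ^ 2)) * c2 + x ^ (b - 1) * c3 + z ^ b * c4 ∧
      g3 = w * c2 + (-(x ^ (b - 1))) * c4 ∧
      g4 = (-w) * c3 + (x * z - y ^ 2) * c4 := by
  subst hx hy hz hw
  have hwp : Prime (X 3 : MvPolynomial (Fin 4) K) := myPrimeXfin 4 3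
  have hqp : Prime (X 0 * X 2 - X 1 ^ 2 : MvPolynomial (Fin 4) K) := myPrimeQ
  have hwq : ¬ (X 3 : MvPolynomial (Fin 4) K) ∣ (X 0 * X 2 - X 1 ^ 2) := by
    intro ⟨c, hc⟩
    have := congrArg (eval ![(1 : K), 0, 1, 0]) hc
    simp at this
  have hqx : ¬ (X 0 * X 2 - X 1 ^ 2 : MvPolynomial (Fin 4) K) ∣ X 0 := by
    intro ⟨c, hc⟩
    have := congrArg (eval ![(1 : K), 1, 1, 0]) hc
    simp at this
  -- Step 1 : X3 divides B := q*g3 + x^(b-1)*g4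
  have hdvd1 : (X 3 : MvPolynomial (Fin 4) K) ∣ (X 0 * X 2 - X 1 ^ 2) *
      ((X 0 * X 2 - X 1 ^ 2) * g3 + X 0 ^ (b - 1) * g4) :=
    ⟨-(X 3 * g1 + (X 0 * X 2 - X 1 ^ 2) * g2 - X 2 ^ b * g4), by linear_combination hsyz⟩
  obtain ⟨u, hu⟩ := (hwp.dvd_or_dvd hdvd1).resolve_left hwq
  -- Step 2 : apply the evaluation killing X 3
  have hφu := congrArg (aeval (fun i : Fin 4 => if i = 3 then (0 : MvPolynomial (Fin 4) K)
    else X i)) hu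
  simp only [map_add, map_mul, map_sub, map_pow, aeval_X, reduceIte,
    show ((0 : Fin 4) = 3) = False from by simp, show ((1 : Fin 4) = 3) = False from by simp,
    show ((2 : Fin 4) = 3) = False from by simp, if_false, if_true, mul_zero, zero_mul] at hφu
  -- now hφu : (X0*X2 - X1^2) * φ g3 + X0^(b-1) * φ g4 = 0
  have hq4 : (X 0 * X 2 - X 1 ^ 2 : MvPolynomial (Fin 4) K) ∣ X 0 ^ (b - 1) *
      aeval (fun i : Fin 4 => if i = 3 then (0 : MvPolynomial (Fin 4) K) else X i) g4 :=
    ⟨-(aeval (fun i : Fin 4 => if i = 3 then (0 : MvPolynomial (Fin 4) K) else X i) g3),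
      by linear_combination hφu⟩
  obtain ⟨h, hh⟩ := (hqp.dvd_or_dvd hq4).resolve_left
    (fun hd => hqx (hqp.dvd_of_dvd_pow hd))
  obtain ⟨t, ht⟩ := myKer (K := K) g4
  have hg4 : g4 = (X 0 * X 2 - X 1 ^ 2) * h + X 3 * t := by linear_combination ht + hh
  -- Step 3
  have hdvd2 : (X 3 : MvPolynomial (Fin 4) K) ∣ (X 0 * X 2 - X 1 ^ 2) *
      (g3 + X 0 ^ (b - 1) * h) :=
    ⟨u - X 0 ^ (b - 1) * t, by linear_combination hu - X 0 ^ (b - 1) * hg4⟩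
  obtain ⟨c2, hc2'⟩ := (hwp.dvd_or_dvd hdvd2).resolve_left hwq
  have huu : u = (X 0 * X 2 - X 1 ^ 2) * c2 + X 0 ^ (b - 1) * t := by
    apply mul_left_cancel₀ hwp.ne_zero
    linear_combination -hu + (X 0 * X 2 - X 1 ^ 2) * hc2' + X 0 ^ (b - 1) * hg4
  -- Step 4
  have hA : X 3 * g1 + (X 0 * X 2 - X 1 ^ 2) * g2 - X 2 ^ b * g4
      = -((X 0 * X 2 - X 1 ^ 2) * u) := by
    apply mul_left_cancel₀ hwp.ne_zero
    linear_combination hsyz - (X 0 * X 2 - X 1 ^ 2) * hu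
  have hE : (X 0 * X 2 - X 1 ^ 2) * (-g2 + X 2 ^ b * h - (X 0 * X 2 - X 1 ^ 2) * c2
      - X 0 ^ (b - 1) * t) = X 3 * (g1 - X 2 ^ b * t) := by
    linear_combination -hA + (X 0 * X 2 - X 1 ^ 2) * huu - X 2 ^ b * hg4
  obtain ⟨d, hd⟩ := (hwp.dvd_or_dvd ⟨_, hE⟩).resolve_left hwq
  have hg1 : g1 = (X 0 * X 2 - X 1 ^ 2) * d + X 2 ^ b * t := by
    apply mul_left_cancel₀ hwp.ne_zero
    linear_combination -hE + (X 0 * X 2 - X 1 ^ 2) * hd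
  refine ⟨-d, c2, -t, h, ?_, ?_, ?_, ?_⟩
  · linear_combination hg1
  · linear_combination -hd
  · linear_combination hc2'
  · linear_combination hg4
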